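/- Let κ ≥ 1, p > 0, and let v : ℝ → ℝ be nondecreasing and concave on [0,1] with v(0) = 0, having derivative d at 0 (from the right within [0,1]) satisfying d ≤ κ·v(1) and d ≥ 2κ·p. If y* ∈ [0,1] maximizes z ↦ v(z) − p·z over [0,1], then y* ≥ (v(1) − p)/(κ·v(1) − p) ≥ 1/(2κ − 1). -/
import Mathlib


/-- A concave nondecreasing valuation v with v(0) = 0, right derivative d at 0
(within [0,1]) with d ≤ κ·v(1) and d ≥ 2κ·p, has any utility maximizer y* at price p satisfying
y* ≥ (v(1) − p)/(κ·v(1) − p) ≥ 1/(2κ − 1). -/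
theorem stmt_10 (κ p d : ℝ) (hκ : 1 ≤ κ) (hp : 0 < p)
    (v : ℝ → ℝ) (hmono : MonotoneOn v (Set.Icc (0:ℝ) 1))
    (hconc : ConcaveOn ℝ (Set.Icc (0:ℝ) 1) v) (hv0 : v 0 = 0)
    (hderiv : HasDerivWithinAt v d (Set.Icc (0:ℝ) 1) 0)
    (hd1 : d ≤ κ * v 1) (hd2 : 2 * κ * p ≤ d)
    (ystar : ℝ) (hy : ystar ∈ Set.Icc (0:ℝ) 1)
    (hmax : ∀ z ∈ Set.Icc (0:ℝ) 1, v z - p * z ≤ v ystar - p * ystar) :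
    (v 1 - p) / (κ * v 1 - p) ≤ ystar ∧ 1 / (2 * κ - 1) ≤ (v 1 - p) / (κ * v 1 - p) := by
  have hκ0 : (0:ℝ) < κ := lt_of_lt_of_le one_pos hκ
  have hd0 : 0 < d := lt_of_lt_of_le (by positivity) hd2
  have hv1 : 2 * p ≤ v 1 := by
    have : 2 * κ * p ≤ κ * v 1 := le_trans hd2 hd1
    nlinarith
  have hden : 0 < κ * v 1 - p := by nlinarith
  -- the set identity
  have hset : Set.Icc (0:ℝ) 1 \ {0} = Set.Ioc (0:ℝ) 1 := by
    ext x
    simp only [Set.mem_diff, Set.mem_Icc, Set.mem_singleton_iff, Set.mem_Ioc]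
    constructor
    · rintro ⟨⟨h1, h2⟩, h3⟩; exact ⟨lt_of_le_of_ne h1 (Ne.symm h3), h2⟩
    · rintro ⟨h1, h2⟩; exact ⟨⟨le_of_lt h1, h2⟩, ne_of_gt h1⟩
  -- tendsto of slope
  have htend : Filter.Tendsto (slope v 0) (nhdsWithin 0 (Set.Ioi (0:ℝ))) (nhds d) := by
    have h := hasDerivWithinAt_iff_tendsto_slope.mp hderiv
    rw [hset] at h
    rwa [nhdsWithin_Ioc_eq_nhdsGT (by norm_num : (0:ℝ) < 1)] at h
  -- ystar > 0
  have hypos : 0 < ystar := by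
    by_contra h
    push_neg at h
    have hy0 : ystar = 0 := le_antisymm h hy.1
    have := hmax 1 (by constructor <;> norm_num)
    rw [hy0, hv0] at this
    nlinarith
  -- v ystar ≤ d * ystar
  have hkey : v ystar ≤ d * ystar := by
    have hslope : v ystar / ystar ≤ d := by
      refine ge_of_tendsto htend ?_
      filter_upwards [Ioc_mem_nhdsGT_of_mem ⟨le_refl (0:ℝ), hypos⟩] with t ht
      have ht0 : 0 < t := ht.1
      have hty : t ≤ ystar := ht.2
      have htmem : t ∈ Set.Icc (0:ℝ) 1 := ⟨le_of_lt ht0, le_trans hty hy.2⟩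
      have := hconc.neg.secant_mono (Set.left_mem_Icc.mpr (by norm_num)) htmem hy
        (ne_of_gt ht0) (ne_of_gt hypos) hty
      simp only [Pi.neg_apply, hv0, neg_zero, sub_zero] at this
      have h2 : v ystar / ystar ≤ v t / t := by
        have := neg_le_neg this
        rw [neg_div, neg_div, neg_neg, neg_neg] at this
        exact this
      calc v ystar / ystar ≤ v t / t := h2
        _ = slope v 0 t := by rw [slope_def_field, hv0, sub_zero, sub_zero]
    calc v ystar = (v ystar / ystar) * ystar := by field_simp
      _ ≤ d * ystar := by
          exact mul_le_mul_of_nonneg_right hslope (le_of_lt hypos)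
  -- main inequality
  have h1 : v 1 - p ≤ v ystar - p * ystar := by
    have := hmax 1 (by constructor <;> norm_num)
    simpa using this
  have hmain : v 1 - p ≤ (κ * v 1 - p) * ystar := by
    have : v 1 - p ≤ (d - p) * ystar := by nlinarith
    nlinarith
  constructor
  · rw [div_le_iff₀ hden]; linarith [hmain, mul_comm ystar (κ * v 1 - p)]
  · rw [div_le_div_iff₀ (by nlinarith) hden]
    nlinarith
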